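/- Let γ be a scalar system of SL_n-type. Then for each ordered pair (i,j) of distinct elements of {1,…,n} there exist a_{ij}, b_{ij} ∈ k, not both zero, such that: (1) for every λ ∈ ℤ^n, a_{ij}·q^{λ_i−λ_j} − b_{ij}·q^{λ_j−λ_i} ≠ 0 and γ({i},{j};λ)·(a_{ij}·q^{λ_i−λ_j} − b_{ij}·q^{λ_j−λ_i}) = a_{ij}·q^{λ_i−λ_j−1} − b_{ij}·q^{λ_j−λ_i+1}; (2) a_{ij}·a_{ji} = b_{ij}·b_{ji} for all distinct i, j; (3) a_{ij}·a_{jk}·b_{ik} = b_{ij}·b_{jk}·a_{ik} for all pairwise distinct i, j, k. Moreover, for each pair (i,j) the parameters are projectively unique: if a', b' ∈ k are not both zero and satisfy condition (1) for the pair (i,j), then there is a nonzero c ∈ k with a' = c·a_{ij} and b' = c·b_{ij}. (Conditions (2) and (3) say that the points [a_{ij} : b_{ij}] ∈ ℙ¹(k) form a point of the toric variety attached to the root system of sl_n, and the nonvanishing in (1) says this point avoids q^{2ℤ} at each root.) -/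

import Mathlib

open Finset

/-- The indicator vector `e_S ∈ ℤ^n` of a subset `S ⊆ {1,…,n}`. -/
def eVec (n : ℕ) (S : Finset (Fin n)) : Fin n → ℤ := fun i => if i ∈ S then 1 else 0

/-- A scalar system of `T\SL_n`-type: a family of scalars `γ(S,T;λ) ∈ k`
indexed by pairs of disjoint subsets `S, T ⊆ {1,…,n}` and `λ ∈ ℤ^n`,
invariant under `λ ↦ λ + (1,…,1)` and normalized on empty sets,
satisfying the relations (i)–(vi) of Definition 5.4 of the paper. -/
structure ScalarSystem (n : ℕ) (k : Type*) [Field k] (q : k) where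
  γ : Finset (Fin n) → Finset (Fin n) → (Fin n → ℤ) → k
  periodic : ∀ (S T : Finset (Fin n)) (lam : Fin n → ℤ),
    γ S T (lam + eVec n Finset.univ) = γ S T lam
  empty_left : ∀ (T : Finset (Fin n)) (lam : Fin n → ℤ), γ ∅ T lam = 1
  empty_right : ∀ (S : Finset (Fin n)) (lam : Fin n → ℤ), γ S ∅ lam = 1
  rel1 : ∀ (S T : Finset (Fin n)) (lam : Fin n → ℤ), Disjoint S T →
    γ S T lam * γ T S (lam - eVec n S) = 1
  rel2 : ∀ (S : Finset (Fin n)) (i j : Fin n) (lam : Fin n → ℤ),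
    i ≠ j → i ∉ S → j ∉ S →
    γ (insert i S) {j} lam * γ {j} S (lam - eVec n S)
      + γ (insert j S) {i} lam * γ {i} S (lam - eVec n S) = q + q⁻¹
  rel3 : ∀ (S : Finset (Fin n)) (i j : Fin n) (lam : Fin n → ℤ),
    i ≠ j → i ∉ S → j ∉ S →
    γ S {i} lam * γ {i} (insert j S) (lam - eVec n (insert j S))
      = γ (insert i S) {j} (lam - eVec n {j}) * γ {j} S (lam - eVec n (insert j S))
  rel4 : ∀ (S T U : Finset (Fin n)) (lam : Fin n → ℤ),
    Disjoint S T → Disjoint S U → Disjoint T U →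
    γ S T (lam + eVec n U) * γ (S ∪ T) U lam = γ S (T ∪ U) lam * γ T U lam
  rel5 : ∀ (i j : Fin n) (lam : Fin n → ℤ), i ≠ j →
    γ {i} {j} lam + γ {j} {i} lam = q + q⁻¹
  rel6 : ∀ (i j l : Fin n) (lam : Fin n → ℤ), i ≠ j → j ≠ l → i ≠ l →
    γ {i} {j, l} lam + γ {j} {l, i} lam + γ {l} {i, j} lam
      = q * q + 1 + q⁻¹ * q⁻¹

namespace ScalarSystem

variable {n : ℕ} {k : Type*} [Field k] {q : k} (Γ : ScalarSystem n k q)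

lemma nz (S T : Finset (Fin n)) (lam : Fin n → ℤ) (h : Disjoint S T) :
    Γ.γ S T lam ≠ 0 :=
  left_ne_zero_of_mul_eq_one (Γ.rel1 S T lam h)

lemma inv2 (S T : Finset (Fin n)) (lam : Fin n → ℤ) (h : Disjoint S T) :
    Γ.γ S T (lam - eVec n S - eVec n T) = Γ.γ S T lam := by
  have h1 := Γ.rel1 S T lam h
  have h2 := Γ.rel1 T S (lam - eVec n S) h.symm
  have e1 : Γ.γ S T lam = (Γ.γ T S (lam - eVec n S))⁻¹ := eq_inv_of_mul_eq_one_left h1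
  have e2 : Γ.γ S T (lam - eVec n S - eVec n T) = (Γ.γ T S (lam - eVec n S))⁻¹ :=
    eq_inv_of_mul_eq_one_right h2
  rw [e1, e2]

lemma shift2 (S T : Finset (Fin n)) (lam : Fin n → ℤ) (h : Disjoint S T) :
    Γ.γ S T (lam + eVec n S + eVec n T) = Γ.γ S T lam := by
  have h0 := Γ.inv2 S T (lam + eVec n S + eVec n T) h
  rw [show lam + eVec n S + eVec n T - eVec n S - eVec n T = lam by abel] at h0
  exact h0.symm

lemma eVec_pair {i j : Fin n} (hij : i ≠ j) :
    eVec n {i, j} = eVec n {i} + eVec n {j} := by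
  funext x
  simp only [eVec, Pi.add_apply, mem_insert, mem_singleton]
  by_cases h1 : x = i
  · subst h1; simp [hij]
  · by_cases h2 : x = j <;> simp [h1, h2, hij.symm]

end ScalarSystem

namespace ScalarSystem

variable {n : ℕ} {k : Type*} [Field k] {q : k} (Γ : ScalarSystem n k q)

lemma disj_s {i j : Fin n} (hij : i ≠ j) : Disjoint ({i} : Finset (Fin n)) {j} :=
  Finset.disjoint_singleton.mpr hij

lemma disj_p {i j l : Fin n} (hij : i ≠ j) (hil : i ≠ l) :
    Disjoint ({i} : Finset (Fin n)) {j, l} := by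
  simp [Finset.disjoint_left, hij, hil]

/-- Master consequence of rel3 + rel1 + inv2. -/
lemma K1 (i j l : Fin n) (hij : i ≠ j) (hjl : j ≠ l) (hil : i ≠ l) (lam : Fin n → ℤ) :
    Γ.γ {i} {j, l} lam * Γ.γ {j} {l} lam * Γ.γ {l} {i, j} (lam - eVec n {i, j})
      = Γ.γ {i} {j} lam := by
  have h3 := Γ.rel3 {j} l i lam hil.symm (by simp [hjl.symm]) (by simp [hij])
  have h1 := Γ.rel1 {i} (insert l {j}) lam (by simp [Finset.disjoint_left, hil, hij])
  rw [Finset.pair_comm l j] at h1 h3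
  have hi2 : Γ.γ {i} {j} (lam - eVec n {i, j}) = Γ.γ {i} {j} lam := by
    rw [eVec_pair hij, sub_add_eq_sub_sub]
    exact Γ.inv2 {i} {j} lam (disj_s hij)
  rw [hi2] at h3
  linear_combination Γ.γ {i} {j, l} lam * h3 + Γ.γ {i} {j} lam * h1

end ScalarSystem

section Qfacts

variable {k : Type*} [Field k] {q : k}

lemma q_sub_ne (hq : q ≠ 0) (hroot : ∀ m : ℤ, m ≠ 0 → q ^ m ≠ 1) :
    q⁻¹ - q ≠ 0 := by
  intro h
  have hinv : q⁻¹ = q := by linear_combination h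
  apply hroot 2 (by norm_num)
  rw [show (2 : ℤ) = 1 + 1 by norm_num, zpow_add_one₀ hq, zpow_one]
  nth_rewrite 2 [← hinv]
  exact mul_inv_cancel₀ hq

lemma two_q_ne (hq : q ≠ 0) (hroot : ∀ m : ℤ, m ≠ 0 → q ^ m ≠ 1) :
    q + q⁻¹ ≠ 0 := by
  intro h
  apply hroot 4 (by norm_num)
  have h2 : q * q = -1 := by
    have h1 : q * (q + q⁻¹) = q * q + 1 := by
      rw [mul_add, mul_inv_cancel₀ hq]
    rw [h, mul_zero] at h1
    linear_combination -h1
  rw [show (4 : ℤ) = ((4 : ℕ) : ℤ) by norm_num, zpow_natCast,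
    show q ^ (4 : ℕ) = (q * q) * (q * q) by ring, h2]
  norm_num

end Qfacts

namespace ScalarSystem

variable {n : ℕ} {k : Type*} [Field k] {q : k} (Γ : ScalarSystem n k q)

lemma shift_other (hq : q ≠ 0) (hroot : ∀ m : ℤ, m ≠ 0 → q ^ m ≠ 1)
    {i j l : Fin n} (hij : i ≠ j) (hil : i ≠ l) (hjl : j ≠ l) (lam : Fin n → ℤ) :
    Γ.γ {i} {j} (lam + eVec n {l}) = Γ.γ {i} {j} lam := by
  have hK1 := Γ.K1 i j l hij hjl hil lam
  have hK6 := Γ.K1 j i l hij.symm hil hjl lam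
  rw [Finset.pair_comm j i] at hK6
  have h4a := Γ.rel4 {i} {j} {l} lam (disj_s hij) (disj_s hil) (disj_s hjl)
  have h4b := Γ.rel4 {j} {i} {l} lam (disj_s hij.symm) (disj_s hjl) (disj_s hil)
  simp only [← Finset.insert_eq] at h4a h4b
  rw [Finset.pair_comm j i] at h4b
  have h5a := Γ.rel5 i j (lam + eVec n {l}) hij
  have h5b := Γ.rel5 i j lam hij
  set X := Γ.γ {i, j} {l} lam with hX
  set T0 := Γ.γ {l} {i, j} (lam - eVec n {i, j}) with hT0
  have e1 : Γ.γ {i} {j} (lam + eVec n {l}) * (X * T0) = Γ.γ {i} {j} lam := by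
    linear_combination T0 * h4a + hK1
  have e2 : Γ.γ {j} {i} (lam + eVec n {l}) * (X * T0) = Γ.γ {j} {i} lam := by
    linear_combination T0 * h4b + hK6
  have h2q : q + q⁻¹ ≠ 0 := two_q_ne hq hroot
  have e3 : X * T0 = 1 := by
    apply mul_left_cancel₀ h2q
    rw [mul_one]
    linear_combination e1 + e2 - (X * T0) * h5a + h5b
  calc Γ.γ {i} {j} (lam + eVec n {l})
      = Γ.γ {i} {j} (lam + eVec n {l}) * (X * T0) := by rw [e3, mul_one]
    _ = Γ.γ {i} {j} lam := e1

end ScalarSystem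

namespace ScalarSystem

variable {n : ℕ} {k : Type*} [Field k] {q : k} (Γ : ScalarSystem n k q)

/-- The fundamental identity `γij γil + γji γjl + γlj γli = [3]_q`. -/
lemma M_id (hq : q ≠ 0) (hroot : ∀ m : ℤ, m ≠ 0 → q ^ m ≠ 1)
    {i j l : Fin n} (hij : i ≠ j) (hjl : j ≠ l) (hil : i ≠ l) (lam : Fin n → ℤ) :
    Γ.γ {i} {j} lam * Γ.γ {i} {l} lam + Γ.γ {j} {i} lam * Γ.γ {j} {l} lam
      + Γ.γ {l} {j} lam * Γ.γ {l} {i} lam = q * q + 1 + q⁻¹ * q⁻¹ := by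
  have h2q : q + q⁻¹ ≠ 0 := two_q_ne hq hroot
  have hK1 := Γ.K1 i j l hij hjl hil lam
  have hK6 := Γ.K1 j i l hij.symm hil hjl lam
  rw [Finset.pair_comm j i] at hK6
  have hK2 := Γ.K1 i l j hil hjl.symm hij lam
  rw [Finset.pair_comm l j] at hK2
  have hK4 := Γ.K1 l i j hil.symm hij hjl.symm lam
  rw [Finset.pair_comm l i] at hK4
  -- rel4 instances
  have ha := Γ.rel4 {i} {l} {j} lam (disj_s hil) (disj_s hij) (disj_s hjl.symm)
  have hb := Γ.rel4 {l} {i} {j} lam (disj_s hil.symm) (disj_s hjl.symm) (disj_s hij)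
  have hc := Γ.rel4 {j} {l} {i} lam (disj_s hjl) (disj_s hij.symm) (disj_s hil.symm)
  have hd := Γ.rel4 {l} {j} {i} lam (disj_s hjl.symm) (disj_s hil.symm) (disj_s hij.symm)
  simp only [← Finset.insert_eq] at ha hb hc hd
  rw [Finset.pair_comm l j] at ha
  rw [Finset.pair_comm l i] at hb
  rw [Finset.pair_comm l i] at hc
  rw [Finset.pair_comm l j, Finset.pair_comm j i] at hd
  have h5y := Γ.rel5 i l (lam + eVec n {j}) hil
  have h5z := Γ.rel5 j l (lam + eVec n {i}) hjl
  have h5ij := Γ.rel5 i j lam hij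
  have h5jl := Γ.rel5 j l lam hjl
  have h5il := Γ.rel5 i l lam hil
  have h2 := Γ.rel2 {l} i j lam hij (by simp [hil]) (by simp [hjl])
  have ia := Γ.rel1 {l} {j} lam (disj_s hjl.symm)
  have ib := Γ.rel1 {l} {i} lam (disj_s hil.symm)
  have h6 := Γ.rel6 i j l lam hij hjl hil
  rw [Finset.pair_comm l i] at h6
  -- abbreviations
  set A1 := Γ.γ {i} {j} lam
  set A1' := Γ.γ {j} {i} lam
  set A2 := Γ.γ {j} {l} lam
  set A2' := Γ.γ {l} {j} lam
  set A3 := Γ.γ {i} {l} lam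
  set A3' := Γ.γ {l} {i} lam
  set P := Γ.γ {i} {j, l} lam
  set R := Γ.γ {j} {i, l} lam
  set T := Γ.γ {l} {i, j} lam
  set Y := Γ.γ {i, l} {j} lam
  set Z := Γ.γ {j, l} {i} lam
  set T0 := Γ.γ {l} {i, j} (lam - eVec n {i, j})
  set R0 := Γ.γ {j} {i, l} (lam - eVec n {i, l})
  set A2m := Γ.γ {j} {l} (lam - eVec n {l})
  set A3m := Γ.γ {i} {l} (lam - eVec n {l})
  -- nonzeroness
  have nT0 : T0 ≠ 0 := Γ.nz _ _ _ (disj_p hil.symm hjl.symm)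
  have nR0 : R0 ≠ 0 := Γ.nz _ _ _ (disj_p hij.symm hjl)
  have nA1 : A1 ≠ 0 := Γ.nz _ _ _ (disj_s hij)
  have nA3 : A3 ≠ 0 := Γ.nz _ _ _ (disj_s hil)
  have nA2' : A2' ≠ 0 := Γ.nz _ _ _ (disj_s hjl.symm)
  have nA3' : A3' ≠ 0 := Γ.nz _ _ _ (disj_s hil.symm)
  -- derived sums
  have hYsum : (q + q⁻¹) * Y = P * A2' + T * A1 := by
    linear_combination ha + hb - Y * h5y
  have hZsum : (q + q⁻¹) * Z = R * A3' + T * A1' := by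
    linear_combination hc + hd - Z * h5z
  -- elimination chain
  have s1 : R * A3 * A1 = P * A2 * A1' :=
    mul_right_cancel₀ nT0 (by linear_combination A1 * hK6 - A1' * hK1)
  have s2 : T * A1 * A3 = P * A2' * A3' :=
    mul_right_cancel₀ nR0 (by linear_combination A3 * hK4 - A3' * hK2)
  have s3 : Y * A3 = P * A2' :=
    mul_left_cancel₀ h2q (by linear_combination A3 * hYsum + s2 + P * A2' * h5il)
  have s4 : Z * (A1 * A3) = P * (A1' * A3') :=
    mul_left_cancel₀ h2q (by
      linear_combination A1 * A3 * hZsum + A3' * s1 + A1' * s2 + P * A1' * A3' * h5jl)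
  have t1 : Y * A2m * (A2' * A3' * A1 * A3) = P * A2' * A3' * A1 := by
    linear_combination A2m * A2' * A3' * A1 * s3 + P * A2' * A3' * A1 * ia
  have t2 : Z * A3m * (A2' * A3' * A1 * A3) = P * A1' * A3' * A2' := by
    linear_combination A3m * A3' * A2' * s4 + P * A1' * A3' * A2' * ib
  have nkey : (q + q⁻¹) * (A2' * A3') ≠ 0 := mul_ne_zero h2q (mul_ne_zero nA2' nA3')
  have s5 : P = A1 * A3 :=
    mul_left_cancel₀ nkey (by
      linear_combination A2' * A3' * A1 * A3 * h2 - t1 - t2 - P * A2' * A3' * h5ij)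
  have sR : R = A1' * A2 :=
    mul_right_cancel₀ (mul_ne_zero nA3 nA1) (by linear_combination s1 + A2 * A1' * s5)
  have sT : T = A2' * A3' :=
    mul_right_cancel₀ (mul_ne_zero nA1 nA3) (by linear_combination s2 + A2' * A3' * s5)
  rw [s5, sR, sT] at h6
  linear_combination h6

end ScalarSystem

namespace ScalarSystem

variable {n : ℕ} {k : Type*} [Field k] {q : k} (Γ : ScalarSystem n k q)

lemma iter_shift {i j : Fin n} (v : Fin n → ℤ)
    (hv : ∀ lam, Γ.γ {i} {j} (lam + v) = Γ.γ {i} {j} lam) :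
    ∀ m : ℤ, ∀ lam, Γ.γ {i} {j} (lam + m • v) = Γ.γ {i} {j} lam := by
  intro m
  induction m using Int.induction_on with
  | zero => intro lam; simp
  | succ m ih =>
      intro lam
      have harg : lam + ((m : ℤ) + 1) • v = (lam + (m : ℤ) • v) + v := by
        rw [add_smul, one_smul]; abel
      rw [harg, hv, ih]
  | pred m ih =>
      intro lam
      have h2 := hv (lam + (-(m : ℤ) - 1) • v)
      have harg : lam + (-(m : ℤ) - 1) • v + v = lam + (-(m : ℤ)) • v := by
        rw [sub_smul, one_smul]; abel
      rw [harg] at h2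
      rw [← h2, ih]

lemma gamma_eq_of_diff (hq : q ≠ 0) (hroot : ∀ m : ℤ, m ≠ 0 → q ^ m ≠ 1)
    {i j : Fin n} (hij : i ≠ j) {lam mu : Fin n → ℤ}
    (h : lam i - lam j = mu i - mu j) :
    Γ.γ {i} {j} lam = Γ.γ {i} {j} mu := by
  have hv2 : ∀ lam : Fin n → ℤ,
      Γ.γ {i} {j} (lam + (eVec n {i} + eVec n {j})) = Γ.γ {i} {j} lam := by
    intro lam
    rw [show lam + (eVec n {i} + eVec n {j}) = lam + eVec n {i} + eVec n {j} by abel]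
    exact Γ.shift2 {i} {j} lam (disj_s hij)
  have hel : ∀ a : Fin n, a ≠ i → a ≠ j → ∀ lam : Fin n → ℤ,
      Γ.γ {i} {j} (lam + eVec n {a}) = Γ.γ {i} {j} lam := fun a hai haj lam =>
    Γ.shift_other hq hroot hij hai.symm haj.symm lam
  have key : ∀ s : Finset (Fin n), ∀ δ : Fin n → ℤ, i ∉ s → j ∉ s →
      (∀ x, x ∉ s → δ x = 0) → ∀ lam, Γ.γ {i} {j} (lam + δ) = Γ.γ {i} {j} lam := by
    intro s
    induction s using Finset.induction_on with
    | empty =>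
        intro δ _ _ hδ lam
        have : δ = 0 := funext fun x => hδ x (notMem_empty x)
        rw [this, add_zero]
    | @insert a s ha ih =>
        intro δ hi hj hδ lam
        have hia : i ≠ a := fun h => hi (h ▸ mem_insert_self a s)
        have hja : j ≠ a := fun h => hj (h ▸ mem_insert_self a s)
        have his : i ∉ s := fun h => hi (mem_insert_of_mem h)
        have hjs : j ∉ s := fun h => hj (mem_insert_of_mem h)
        set δ' : Fin n → ℤ := fun x => if x = a then 0 else δ x with hδ'
        have hdecomp : lam + δ = (lam + δ') + (δ a) • eVec n {a} := by
          funext x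
          by_cases hx : x = a
          · subst hx; simp [δ', eVec]
          · simp [δ', eVec, hx]
        rw [hdecomp, Γ.iter_shift (eVec n {a}) (hel a hia.symm hja.symm) (δ a), ih δ' his hjs]
        intro x hx
        by_cases hxa : x = a
        · simp [δ', hxa]
        · have : x ∉ insert a s := by simp [hxa, hx]
          simp [δ', hxa, hδ x this]
  set c := lam j - mu j with hc
  set v : Fin n → ℤ := eVec n {i} + eVec n {j} with hv
  set δ : Fin n → ℤ := lam - mu - c • v with hδdef
  have hδi : δ i = 0 := by
    simp only [hδdef, hv, hc, Pi.sub_apply, Pi.smul_apply, Pi.add_apply, eVec,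
      mem_singleton, if_pos rfl, if_neg hij, if_neg hij.symm, if_true, smul_eq_mul]
    omega
  have hδj : δ j = 0 := by
    simp only [hδdef, hv, hc, Pi.sub_apply, Pi.smul_apply, Pi.add_apply, eVec,
      mem_singleton, if_pos rfl, if_neg hij, if_neg hij.symm, if_true, smul_eq_mul]
    omega
  have hsupp : ∀ x, x ∉ (univ.erase i).erase j → δ x = 0 := by
    intro x hx
    have hx' : x = j ∨ x = i := by
      by_contra hcon
      push_neg at hcon
      exact hx (Finset.mem_erase.mpr ⟨hcon.1, Finset.mem_erase.mpr ⟨hcon.2, mem_univ x⟩⟩)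
    rcases hx' with h1 | h1
    · rw [h1]; exact hδj
    · rw [h1]; exact hδi
  have hi_not : i ∉ (univ.erase i).erase j := fun hmem =>
    (Finset.notMem_erase i univ) (Finset.mem_of_mem_erase hmem)
  have hj_not : j ∉ (univ.erase i).erase j := Finset.notMem_erase j _
  calc Γ.γ {i} {j} lam = Γ.γ {i} {j} ((mu + c • v) + δ) := by
        rw [show (mu + c • v) + δ = lam by rw [hδdef]; abel]
    _ = Γ.γ {i} {j} (mu + c • v) := key _ δ hi_not hj_not hsupp _
    _ = Γ.γ {i} {j} mu := Γ.iter_shift v hv2 c mu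

end ScalarSystem

namespace ScalarSystem

variable {n : ℕ} {k : Type*} [Field k] {q : k} (Γ : ScalarSystem n k q)

lemma pair_formula (hq : q ≠ 0) (hroot : ∀ m : ℤ, m ≠ 0 → q ^ m ≠ 1)
    {i j : Fin n} (hij : i ≠ j) (lam : Fin n → ℤ) :
    ((Γ.γ {i} {j} 0 - q) * q ^ (lam i - lam j)
        - (Γ.γ {i} {j} 0 - q⁻¹) * q ^ (lam j - lam i) ≠ 0) ∧
      Γ.γ {i} {j} lam * ((Γ.γ {i} {j} 0 - q) * q ^ (lam i - lam j)
        - (Γ.γ {i} {j} 0 - q⁻¹) * q ^ (lam j - lam i))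
      = (Γ.γ {i} {j} 0 - q) * q ^ (lam i - lam j - 1)
        - (Γ.γ {i} {j} 0 - q⁻¹) * q ^ (lam j - lam i + 1) := by
  set x := Γ.γ {i} {j} (0 : Fin n → ℤ) with hx
  set a := x - q with hadef
  set b := x - q⁻¹ with hbdef
  -- difference of the representative point
  have he1 : eVec n {i} i = 1 := by simp [eVec]
  have he2 : eVec n {i} j = 0 := by simp [eVec, hij.symm]
  have hediff : ∀ m : ℤ, (m • eVec n {i}) i - (m • eVec n {i}) j = m := by
    intro m
    simp [Pi.smul_apply, smul_eq_mul, he1, he2]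
  -- the recursion
  have hrec : ∀ mu : Fin n → ℤ,
      Γ.γ {i} {j} mu * ((q + q⁻¹) - Γ.γ {i} {j} (mu - eVec n {i})) = 1 := by
    intro mu
    have h1 := Γ.rel1 {i} {j} mu (disj_s hij)
    have h5 := Γ.rel5 j i (mu - eVec n {i}) hij.symm
    linear_combination h1 - Γ.γ {i} {j} mu * h5
  have hnz : ∀ mu : Fin n → ℤ, Γ.γ {i} {j} mu ≠ 0 :=
    fun mu => Γ.nz _ _ _ (disj_s hij)
  have hnz2 : ∀ mu : Fin n → ℤ, (q + q⁻¹) - Γ.γ {i} {j} mu ≠ 0 := by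
    intro mu
    have h5 := Γ.rel5 i j mu hij
    have : (q + q⁻¹) - Γ.γ {i} {j} mu = Γ.γ {j} {i} mu := by linear_combination -h5
    rw [this]
    exact Γ.nz _ _ _ (disj_s hij.symm)
  -- recursion for the one-variable function
  have grec : ∀ m : ℤ, Γ.γ {i} {j} (m • eVec n {i})
      * ((q + q⁻¹) - Γ.γ {i} {j} ((m - 1) • eVec n {i})) = 1 := by
    intro m
    have h0 := hrec (m • eVec n {i})
    have he : Γ.γ {i} {j} (m • eVec n {i} - eVec n {i})
        = Γ.γ {i} {j} ((m - 1) • eVec n {i}) := by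
      apply Γ.gamma_eq_of_diff hq hroot hij
      have h1 := hediff m
      have h2 := hediff (m - 1)
      simp only [Pi.sub_apply] at *
      omega
    rw [he] at h0
    exact h0
  -- the three-term recurrence for D
  have hD1 : ∀ m : ℤ, a * q ^ (m + 1) - b * q ^ (-(m + 1))
      = (q + q⁻¹) * (a * q ^ m - b * q ^ (-m))
        - (a * q ^ (m - 1) - b * q ^ (-(m - 1))) := by
    intro m
    rw [show -(m + 1) = -m - 1 by ring, show -(m - 1) = -m + 1 by ring,
      zpow_add_one₀ hq, zpow_sub_one₀ hq, zpow_add_one₀ hq, zpow_sub_one₀ hq]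
    ring
  -- main induction
  have key : ∀ m : ℤ, (a * q ^ m - b * q ^ (-m) ≠ 0) ∧
      Γ.γ {i} {j} (m • eVec n {i}) * (a * q ^ m - b * q ^ (-m))
        = a * q ^ (m - 1) - b * q ^ (-(m - 1)) := by
    intro m
    induction m using Int.induction_on with
    | zero =>
        constructor
        · simp only [zpow_zero, neg_zero, mul_one]
          rw [show a - b = q⁻¹ - q by rw [hadef, hbdef]; ring]
          exact q_sub_ne hq hroot
        · rw [zero_smul, ← hx]
          simp only [zpow_zero, neg_zero, mul_one, zero_sub, neg_neg, zpow_neg_one,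
            zpow_one]
          rw [hadef, hbdef]
          ring
    | succ m ih =>
        obtain ⟨ih1, ih2⟩ := ih
        have hD := hD1 (m : ℤ)
        rw [ih2.symm] at hD
        have hfac : a * q ^ ((m : ℤ) + 1) - b * q ^ (-((m : ℤ) + 1))
            = ((q + q⁻¹) - Γ.γ {i} {j} ((m : ℤ) • eVec n {i}))
              * (a * q ^ (m : ℤ) - b * q ^ (-(m : ℤ))) := by
          rw [hD]; ring
        constructor
        · rw [hfac]
          exact mul_ne_zero (hnz2 _) ih1
        · rw [show ((m : ℤ) + 1 - 1) = (m : ℤ) by ring, hfac]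
          have hg := grec ((m : ℤ) + 1)
          rw [show ((m : ℤ) + 1 - 1) = (m : ℤ) by ring] at hg
          linear_combination (a * q ^ (m : ℤ) - b * q ^ (-(m : ℤ))) * hg
    | pred m ih =>
        obtain ⟨ih1, ih2⟩ := ih
        have hne : a * q ^ (-(m : ℤ) - 1) - b * q ^ (-(-(m : ℤ) - 1)) ≠ 0 := by
          rw [show (-(m : ℤ) - 1) = (-(m : ℤ) - 1) from rfl]
          have : a * q ^ (-(m : ℤ) - 1) - b * q ^ (-(-(m : ℤ) - 1))
              = Γ.γ {i} {j} ((-(m : ℤ)) • eVec n {i})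
                * (a * q ^ (-(m : ℤ)) - b * q ^ (-(-(m : ℤ)))) := by
            rw [ih2, show (-(m : ℤ) - 1) = -(m : ℤ) - 1 from rfl]
          rw [this]
          exact mul_ne_zero (hnz _) ih1
        refine ⟨hne, ?_⟩
        -- prove the equation at -(m+1)
        apply mul_left_cancel₀ (hnz ((-(m : ℤ)) • eVec n {i}))
        have hg := grec (-(m : ℤ))
        have hD := hD1 (-(m : ℤ) - 1)
        rw [show (-(m : ℤ) - 1 + 1) = -(m : ℤ) by ring,
          show (-(m : ℤ) - 1 - 1) = -(m : ℤ) - 1 - 1 from rfl] at hD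
        -- hD : D(-m) = [2] * D(-m-1) - D(-m-2)
        linear_combination -(a * q ^ (-(m : ℤ) - 1) - b * q ^ (-(-(m : ℤ) - 1))) * hg
          - Γ.γ {i} {j} ((-(m : ℤ)) • eVec n {i}) * hD + ih2
  -- conclude
  have hrep : Γ.γ {i} {j} lam = Γ.γ {i} {j} ((lam i - lam j) • eVec n {i}) := by
    apply Γ.gamma_eq_of_diff hq hroot hij
    rw [hediff]
  obtain ⟨k1, k2⟩ := key (lam i - lam j)
  rw [show lam j - lam i = -(lam i - lam j) by ring,
    show -(lam i - lam j) + 1 = -(lam i - lam j - 1) by ring, hrep]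
  exact ⟨k1, k2⟩

end ScalarSystem

/-- Lemma 5.11: for a scalar system of `SL_n`-type there exist, for each
ordered pair `(i,j)` of distinct indices, parameters `[a_{ij} : b_{ij}] ∈ ℙ¹(k)`
avoiding `q^{2ℤ}` such that
`γ({i},{j};λ) = (a_{ij} q^{λ_i−λ_j−1} − b_{ij} q^{λ_j−λ_i+1})/(a_{ij} q^{λ_i−λ_j} − b_{ij} q^{λ_j−λ_i})`,
satisfying the toric relations `a_{ij} a_{ji} = b_{ij} b_{ji}` and
`a_{ij} a_{jk} b_{ik} = b_{ij} b_{jk} a_{ik}`; moreover the parameters for each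
pair are unique up to a common nonzero scalar. -/
theorem scalarSystem_toric_parameters {n : ℕ} (hn : 1 ≤ n)
    {k : Type*} [Field k] [CharZero k]
    (q : k) (hq : q ≠ 0) (hroot : ∀ m : ℤ, m ≠ 0 → q ^ m ≠ 1)
    (Γ : ScalarSystem n k q) :
    ∃ a b : Fin n → Fin n → k,
      (∀ i j : Fin n, i ≠ j → ¬(a i j = 0 ∧ b i j = 0)) ∧
      (∀ (i j : Fin n), i ≠ j → ∀ lam : Fin n → ℤ,
        a i j * q ^ (lam i - lam j) - b i j * q ^ (lam j - lam i) ≠ 0 ∧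
        Γ.γ {i} {j} lam * (a i j * q ^ (lam i - lam j) - b i j * q ^ (lam j - lam i))
          = a i j * q ^ (lam i - lam j - 1) - b i j * q ^ (lam j - lam i + 1)) ∧
      (∀ i j : Fin n, i ≠ j → a i j * a j i = b i j * b j i) ∧
      (∀ i j l : Fin n, i ≠ j → j ≠ l → i ≠ l →
        a i j * a j l * b i l = b i j * b j l * a i l) ∧
      (∀ (i j : Fin n), i ≠ j → ∀ a' b' : k, ¬(a' = 0 ∧ b' = 0) →
        (∀ lam : Fin n → ℤ,
          a' * q ^ (lam i - lam j) - b' * q ^ (lam j - lam i) ≠ 0 ∧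
          Γ.γ {i} {j} lam * (a' * q ^ (lam i - lam j) - b' * q ^ (lam j - lam i))
            = a' * q ^ (lam i - lam j - 1) - b' * q ^ (lam j - lam i + 1)) →
        ∃ c : k, c ≠ 0 ∧ a' = c * a i j ∧ b' = c * b i j) := by
  clear hn
  refine ⟨fun i j => Γ.γ {i} {j} 0 - q, fun i j => Γ.γ {i} {j} 0 - q⁻¹, ?_, ?_, ?_, ?_, ?_⟩
  · -- not both zero
    intro i j hij
    rintro ⟨h1, h2⟩
    exact q_sub_ne hq hroot (by linear_combination h1 - h2)
  · -- condition (1)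
    intro i j hij lam
    exact Γ.pair_formula hq hroot hij lam
  · -- condition (2)
    intro i j hij
    show (Γ.γ {i} {j} 0 - q) * (Γ.γ {j} {i} 0 - q)
        = (Γ.γ {i} {j} 0 - q⁻¹) * (Γ.γ {j} {i} 0 - q⁻¹)
    linear_combination (q⁻¹ - q) * Γ.rel5 i j 0 hij
  · -- condition (3): the toric relation
    intro i j l hij hjl hil
    have hM := Γ.M_id hq hroot hij hjl hil 0
    have e1 : Γ.γ {j} {i} (0 : Fin n → ℤ) = (q + q⁻¹) - Γ.γ {i} {j} 0 := by
      linear_combination Γ.rel5 i j 0 hij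
    have e2 : Γ.γ {l} {j} (0 : Fin n → ℤ) = (q + q⁻¹) - Γ.γ {j} {l} 0 := by
      linear_combination Γ.rel5 j l 0 hjl
    have e3 : Γ.γ {l} {i} (0 : Fin n → ℤ) = (q + q⁻¹) - Γ.γ {i} {l} 0 := by
      linear_combination Γ.rel5 i l 0 hil
    rw [e1, e2, e3] at hM
    have hQ : q * q⁻¹ = 1 := mul_inv_cancel₀ hq
    show (Γ.γ {i} {j} 0 - q) * (Γ.γ {j} {l} 0 - q) * (Γ.γ {i} {l} 0 - q⁻¹)
        = (Γ.γ {i} {j} 0 - q⁻¹) * (Γ.γ {j} {l} 0 - q⁻¹) * (Γ.γ {i} {l} 0 - q)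
    linear_combination (q⁻¹ - q) * hM - (q⁻¹ - q) * hQ
  · -- uniqueness up to scalar
    intro i j hij a' b' hnb h'
    obtain ⟨hne0, heq0⟩ := h' 0
    simp only [Pi.zero_apply, sub_self, zpow_zero, mul_one, zero_sub, zero_add,
      zpow_one, zpow_neg_one] at heq0
    have hab : a' * (Γ.γ {i} {j} 0 - q⁻¹) = (Γ.γ {i} {j} 0 - q) * b' := by
      linear_combination heq0
    by_cases ha : Γ.γ {i} {j} 0 - q = 0
    · have hb : Γ.γ {i} {j} 0 - q⁻¹ ≠ 0 := by
        intro hb0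
        exact q_sub_ne hq hroot (by linear_combination ha - hb0)
      have ha' : a' = 0 := by
        have h0 : a' * (Γ.γ {i} {j} 0 - q⁻¹) = 0 := by rw [hab, ha, zero_mul]
        exact (mul_eq_zero.mp h0).resolve_right hb
      have hb' : b' ≠ 0 := fun hb0 => hnb ⟨ha', hb0⟩
      refine ⟨b' / (Γ.γ {i} {j} 0 - q⁻¹), div_ne_zero hb' hb, ?_, ?_⟩
      · show a' = _ * (Γ.γ {i} {j} 0 - q)
        rw [ha', ha, mul_zero]
      · show b' = _ * (Γ.γ {i} {j} 0 - q⁻¹)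
        rw [div_mul_cancel₀ _ hb]
    · have ha' : a' ≠ 0 := by
        intro ha0
        apply hnb
        refine ⟨ha0, ?_⟩
        rw [ha0, zero_mul] at hab
        exact (mul_eq_zero.mp hab.symm).resolve_left ha
      refine ⟨a' / (Γ.γ {i} {j} 0 - q), div_ne_zero ha' ha, ?_, ?_⟩
      · show a' = _ * (Γ.γ {i} {j} 0 - q)
        rw [div_mul_cancel₀ _ ha]
      · show b' = a' / (Γ.γ {i} {j} 0 - q) * (Γ.γ {i} {j} 0 - q⁻¹)
        rw [div_mul_eq_mul_div, eq_div_iff ha]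
        linear_combination -hab
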